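/- Let (𝔄, H, (ι_j)_{j∈ℤ}, Ω) be an exchangeable stochastic process. Then the following are equivalent: (a) [block singleton condition] ⟨XYZΩ, Ω⟩ = ⟨XZΩ, Ω⟩·⟨YΩ, Ω⟩ whenever I₁, I₂, I₃ ⊆ ℤ are finite with (I₁ ∪ I₃) ∩ I₂ = ∅, X ∈ 𝔄_{I₁}, Y ∈ 𝔄_{I₂} and Z ∈ 𝔄_{I₃}; (b) [convergence to equilibrium] for all finite I₁, I₃ ⊆ ℤ, X ∈ 𝔄_{I₁}, Z ∈ 𝔄_{I₃}, every m ≥ 1, k₁,…,k_m ∈ ℤ and B₁,…,B_m ∈ 𝔄, the averages (1/|P_I|) Σ_{g ∈ P_I} ⟨X · ι_{g(k₁)}(B₁)⋯ι_{g(k_m)}(B_m) · Z Ω, Ω⟩ converge, along the net of finite subsets I ⊆ ℤ directed by inclusion, to ⟨XZΩ, Ω⟩·⟨ι_{k₁}(B₁)⋯ι_{k_m}(B_m)Ω, Ω⟩. -/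

import Mathlib

set_option linter.unusedSectionVars false
set_option maxHeartbeats 1000000


open Filter

variable {A H : Type*} [NormedRing A] [StarRing A] [CStarRing A]
  [NormedAlgebra ℂ A] [StarModule ℂ A] [CompleteSpace A]
  [NormedAddCommGroup H] [InnerProductSpace ℂ H] [CompleteSpace H]

/-- The *-subalgebra `𝔄_I` of `B(H)` generated by `⋃_{j ∈ I} ι_j(𝔄)`. -/
noncomputable def localAlgebra (ι : ℤ → A →⋆ₐ[ℂ] (H →L[ℂ] H)) (I : Finset ℤ) :
    StarSubalgebra ℂ (H →L[ℂ] H) :=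
  StarAlgebra.adjoin ℂ (⋃ j ∈ I, Set.range fun a : A => ι j a)

/-- The permutation of `ℤ` obtained by extending a permutation of the finite set `I`
by the identity outside `I`; as `g` ranges over `Equiv.Perm I` these are exactly the
elements of the group `P_I` of permutations of `ℤ` fixing `ℤ ∖ I` pointwise. -/
def extendPerm (I : Finset ℤ) (g : Equiv.Perm {x : ℤ // x ∈ I}) : Equiv.Perm ℤ :=
  g.extendDomain (Equiv.refl _)

section aux

variable (ι : ℤ → A →⋆ₐ[ℂ] (H →L[ℂ] H))

lemma star_gens (I : Finset ℤ) :
    star (⋃ j ∈ I, Set.range fun a : A => ι j a) = ⋃ j ∈ I, Set.range fun a : A => ι j a := by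
  ext x
  simp only [Set.mem_star, Set.mem_iUnion, Set.mem_range]
  constructor
  · rintro ⟨j, hj, a, ha⟩
    exact ⟨j, hj, star a, by rw [map_star, ha, star_star]⟩
  · rintro ⟨j, hj, a, ha⟩
    exact ⟨j, hj, star a, by rw [map_star, ← ha]⟩

lemma mem_span_of_mem_localAlgebra {I : Finset ℤ} {X : H →L[ℂ] H}
    (hX : X ∈ localAlgebra ι I) :
    X ∈ Submodule.span ℂ
      ((Submonoid.closure (⋃ j ∈ I, Set.range fun a : A => ι j a) : Submonoid (H →L[ℂ] H)) :
        Set (H →L[ℂ] H)) := by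
  have h := StarAlgebra.adjoin_eq_span (R := ℂ)
    (s := (⋃ j ∈ I, Set.range fun a : A => ι j a))
  rw [Set.union_eq_self_of_subset_right (by rw [star_gens ι I])] at h
  · have : X ∈ Subalgebra.toSubmodule (StarAlgebra.adjoin ℂ
      (⋃ j ∈ I, Set.range fun a : A => ι j a)).toSubalgebra := hX
    rwa [h] at this

/-- representation of monoid closure elements as products -/
lemma rep_of_mem_closure {I : Finset ℤ} {W : H →L[ℂ] H}
    (hW : W ∈ Submonoid.closure (⋃ j ∈ I, Set.range fun a : A => ι j a)) :
    ∃ (n : ℕ) (j : Fin n → ℤ) (a : Fin n → A), (∀ i, j i ∈ I) ∧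
      W = (List.ofFn fun i => ι (j i) (a i)).prod := by
  obtain ⟨l, hl, rfl⟩ := Submonoid.exists_list_of_mem_closure hW
  have hmem : ∀ i : Fin l.length, ∃ j ∈ I, ∃ a : A, l.get i = ι j a := by
    intro i
    have := hl (l.get i) (List.get_mem l i)
    simp only [Set.mem_iUnion, Set.mem_range] at this
    obtain ⟨j, hj, a, ha⟩ := this
    exact ⟨j, hj, a, ha.symm⟩
  choose j hj a ha using hmem
  refine ⟨l.length, j, a, hj, ?_⟩
  conv_lhs => rw [← List.ofFn_get l]
  congr 1
  exact congrArg List.ofFn (funext fun i => ha i)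

lemma prod_ofFn_three {M : Type*} [Monoid M] {n₁ n₂ n₃ : ℕ}
    (f : Fin n₁ → M) (g : Fin n₂ → M) (h : Fin n₃ → M) :
    (List.ofFn (Fin.append (Fin.append f g) h)).prod =
      (List.ofFn f).prod * (List.ofFn g).prod * (List.ofFn h).prod := by
  simp [List.ofFn_fin_append, List.prod_append, mul_assoc]

end aux

section core
variable (ι : ℤ → A →⋆ₐ[ℂ] (H →L[ℂ] H))

lemma append3_zip {α β γ : Type*} {n₁ n₂ n₃ : ℕ} (G : α → β → γ)
    (f₁ : Fin n₁ → α) (f₂ : Fin n₂ → α) (f₃ : Fin n₃ → α)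
    (g₁ : Fin n₁ → β) (g₂ : Fin n₂ → β) (g₃ : Fin n₃ → β) :
    (fun i => G (Fin.append (Fin.append f₁ f₂) f₃ i) (Fin.append (Fin.append g₁ g₂) g₃ i)) =
      Fin.append (Fin.append (fun i => G (f₁ i) (g₁ i)) (fun i => G (f₂ i) (g₂ i)))
        (fun i => G (f₃ i) (g₃ i)) := by
  funext i
  induction i using Fin.addCases with
  | left i =>
    induction i using Fin.addCases with
    | left i => simp [Fin.append_left]
    | right i => simp [Fin.append_left, Fin.append_right]
  | right i => simp [Fin.append_right]

/-- the functional `X ↦ ⟨Ω, (X * W * Z) Ω⟩` as a linear map -/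
noncomputable def leftFunc (Ω : H) (W Z : H →L[ℂ] H) : (H →L[ℂ] H) →ₗ[ℂ] ℂ where
  toFun X := inner ℂ Ω ((X * W * Z) Ω)
  map_add' X X' := by
    simp [add_mul, ContinuousLinearMap.add_apply, inner_add_right]
  map_smul' c X := by
    simp [smul_mul_assoc, ContinuousLinearMap.smul_apply, inner_smul_right]

/-- the functional `Z ↦ ⟨Ω, (X * W * Z) Ω⟩` as a linear map -/
noncomputable def rightFunc (Ω : H) (X W : H →L[ℂ] H) : (H →L[ℂ] H) →ₗ[ℂ] ℂ where
  toFun Z := inner ℂ Ω ((X * W * Z) Ω)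
  map_add' Z Z' := by
    simp [mul_add, ContinuousLinearMap.add_apply, inner_add_right]
  map_smul' c Z := by
    simp [mul_smul_comm, ContinuousLinearMap.smul_apply, inner_smul_right]

lemma sandwich_exchange (Ω : H)
    (hexch : ∀ g : Equiv.Perm ℤ, {x : ℤ | g x ≠ x}.Finite →
      ∀ n : ℕ, 1 ≤ n → ∀ (j : Fin n → ℤ) (a : Fin n → A),
        (inner ℂ Ω (((List.ofFn fun i => ι (g (j i)) (a i)).prod) Ω) : ℂ)
          = inner ℂ Ω (((List.ofFn fun i => ι (j i) (a i)).prod) Ω))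
    {I₁ I₃ : Finset ℤ} {X Z : H →L[ℂ] H}
    (hX : X ∈ localAlgebra ι I₁) (hZ : Z ∈ localAlgebra ι I₃)
    (σ : Equiv.Perm ℤ) (hσfin : {x : ℤ | σ x ≠ x}.Finite)
    (hσfix : ∀ x ∈ I₁ ∪ I₃, σ x = x)
    {m : ℕ} (hm : 1 ≤ m) (k : Fin m → ℤ) (B : Fin m → A) :
    (inner ℂ Ω ((X * (List.ofFn fun i => ι (σ (k i)) (B i)).prod * Z) Ω) : ℂ)
      = inner ℂ Ω ((X * (List.ofFn fun i => ι (k i) (B i)).prod * Z) Ω) := by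
  classical
  set Wσ := (List.ofFn fun i => ι (σ (k i)) (B i)).prod with hWσ
  set W := (List.ofFn fun i => ι (k i) (B i)).prod with hW
  -- core claim for monomials
  have core : ∀ Xp ∈ Submonoid.closure (⋃ j ∈ I₁, Set.range fun a : A => ι j a),
      ∀ Zp ∈ Submonoid.closure (⋃ j ∈ I₃, Set.range fun a : A => ι j a),
      (inner ℂ Ω ((Xp * Wσ * Zp) Ω) : ℂ) = inner ℂ Ω ((Xp * W * Zp) Ω) := by
    intro Xp hXp Zp hZp
    obtain ⟨n₁, j₁, a₁, hj₁, rfl⟩ := rep_of_mem_closure ι hXp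
    obtain ⟨n₃, j₃, a₃, hj₃, rfl⟩ := rep_of_mem_closure ι hZp
    set jAll := Fin.append (Fin.append j₁ k) j₃ with hjAll
    set aAll := Fin.append (Fin.append a₁ B) a₃ with haAll
    have h1 : (fun i => ι (jAll i) (aAll i)) =
        Fin.append (Fin.append (fun i => ι (j₁ i) (a₁ i)) (fun i => ι (k i) (B i)))
          (fun i => ι (j₃ i) (a₃ i)) :=
      append3_zip (fun x a => ι x a) j₁ k j₃ a₁ B a₃
    have h2 : (fun i => ι (σ (jAll i)) (aAll i)) =
        Fin.append (Fin.append (fun i => ι (j₁ i) (a₁ i)) (fun i => ι (σ (k i)) (B i)))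
          (fun i => ι (j₃ i) (a₃ i)) := by
      funext i
      induction i using Fin.addCases with
      | left i =>
        induction i using Fin.addCases with
        | left i =>
          simp [hjAll, haAll, Fin.append_left,
            hσfix (j₁ i) (Finset.mem_union_left _ (hj₁ i))]
        | right i => simp [hjAll, haAll, Fin.append_left, Fin.append_right]
      | right i =>
        simp [hjAll, haAll, Fin.append_right,
          hσfix (j₃ i) (Finset.mem_union_right _ (hj₃ i))]
    have hE := hexch σ hσfin (n₁ + m + n₃) (by omega) jAll aAll
    rw [h1, h2] at hE
    rw [prod_ofFn_three, prod_ofFn_three] at hE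
    exact hE
  -- extend by linearity in Z, for Xp a monomial
  have stepZ : ∀ Xp ∈ Submonoid.closure (⋃ j ∈ I₁, Set.range fun a : A => ι j a),
      (inner ℂ Ω ((Xp * Wσ * Z) Ω) : ℂ) = inner ℂ Ω ((Xp * W * Z) Ω) := by
    intro Xp hXp
    exact LinearMap.eqOn_span (f := rightFunc Ω Xp Wσ) (g := rightFunc Ω Xp W)
      (fun Zp hZp => core Xp hXp Zp hZp) (mem_span_of_mem_localAlgebra ι hZ)
  exact LinearMap.eqOn_span (f := leftFunc Ω Wσ Z) (g := leftFunc Ω W Z)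
    (fun Xp hXp => stepZ Xp hXp) (mem_span_of_mem_localAlgebra ι hX)

end core

section tools

variable (ι : ℤ → A →⋆ₐ[ℂ] (H →L[ℂ] H))

lemma extendPerm_support (I : Finset ℤ) (g : Equiv.Perm {x : ℤ // x ∈ I}) :
    {x : ℤ | extendPerm I g x ≠ x}.Finite := by
  apply Set.Finite.subset I.finite_toSet
  intro x hx
  by_contra hxI
  exact hx (Equiv.Perm.extendDomain_apply_not_subtype g (Equiv.refl _) (by simpa using hxI))

lemma extendPerm_apply_mem (I : Finset ℤ) (g : Equiv.Perm {x : ℤ // x ∈ I}) {x : ℤ}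
    (hx : x ∈ I) : extendPerm I g x = ↑(g ⟨x, hx⟩) := by
  simpa [extendPerm] using Equiv.Perm.extendDomain_apply_subtype g (Equiv.refl _) (p := (· ∈ I)) hx

lemma exists_perm_extend (F K : Finset ℤ) (φ : ℤ → ℤ)
    (hinj : Set.InjOn φ K) (himg : ∀ x ∈ K, φ x ∉ F) (hdisj : Disjoint F K) :
    ∃ σ : Equiv.Perm ℤ, {x : ℤ | σ x ≠ x}.Finite ∧ (∀ x ∈ F, σ x = x) ∧
      ∀ x ∈ K, σ x = φ x := by
  classical
  set T : Finset ℤ := F ∪ K ∪ K.image φ with hT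
  have hFT : F ⊆ T := (Finset.subset_union_left).trans Finset.subset_union_left
  have hKT : K ⊆ T := (Finset.subset_union_right).trans Finset.subset_union_left
  set f : {x : ℤ // x ∈ T} → ℤ := fun x => if x.1 ∈ K then φ x.1 else x.1 with hf
  set s : Finset {x : ℤ // x ∈ T} := Finset.univ.filter (fun x => x.1 ∈ K ∪ F) with hs
  have hcard : Fintype.card {x : ℤ // x ∈ T} = T.card := Fintype.card_coe T
  have hmaps : Finset.image f s ⊆ T := by
    intro y hy
    simp only [Finset.mem_image] at hy
    obtain ⟨x, hxs, rfl⟩ := hy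
    by_cases hxK : x.1 ∈ K
    · simp only [hf, if_pos hxK]
      exact Finset.mem_union_right _ (Finset.mem_image_of_mem φ hxK)
    · simp only [hf, if_neg hxK]
      exact x.2
  have hinjf : Set.InjOn f s := by
    intro x hx y hy hxy
    simp only [hf] at hxy
    by_cases hxK : x.1 ∈ K <;> by_cases hyK : y.1 ∈ K
    · rw [if_pos hxK, if_pos hyK] at hxy
      exact Subtype.ext (hinj hxK hyK hxy)
    · rw [if_pos hxK, if_neg hyK] at hxy
      exfalso
      have hyF : y.1 ∈ F := by
        have := hy
        simp only [hs, Finset.mem_coe, Finset.mem_filter, Finset.mem_union] at this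
        tauto
      exact himg x.1 hxK (hxy ▸ hyF)
    · rw [if_neg hxK, if_pos hyK] at hxy
      exfalso
      have hxF : x.1 ∈ F := by
        have := hx
        simp only [hs, Finset.mem_coe, Finset.mem_filter, Finset.mem_union] at this
        tauto
      exact himg y.1 hyK (hxy ▸ hxF)
    · rw [if_neg hxK, if_neg hyK] at hxy
      exact Subtype.ext hxy
  obtain ⟨e, he⟩ := Finset.exists_equiv_extend_of_card_eq hcard hmaps hinjf
  set σ : Equiv.Perm ℤ := Equiv.Perm.extendDomain e (Equiv.refl _) with hσ
  have happly : ∀ x (hx : x ∈ T), σ x = ↑(e ⟨x, hx⟩) := by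
    intro x hx
    rw [hσ]
    simpa using Equiv.Perm.extendDomain_apply_subtype e (Equiv.refl _) (p := (· ∈ T)) hx
  refine ⟨σ, ?_, ?_, ?_⟩
  · apply Set.Finite.subset T.finite_toSet
    intro x hx
    by_contra hxT
    apply hx
    rw [hσ]
    exact Equiv.Perm.extendDomain_apply_not_subtype e (Equiv.refl _) (by simpa using hxT)
  · intro x hxF
    have hxT : x ∈ T := hFT hxF
    rw [happly x hxT, he ⟨x, hxT⟩ (by simp [hs, Finset.mem_union, hxF])]
    have : (⟨x, hxT⟩ : {x : ℤ // x ∈ T}).1 ∉ K := fun hK =>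
      (Finset.disjoint_left.mp hdisj hxF) hK
    simp [hf, if_neg this]
  · intro x hxK
    have hxT : x ∈ T := hKT hxK
    rw [happly x hxT, he ⟨x, hxT⟩ (by simp [hs, Finset.mem_union, hxK])]
    simp [hf, if_pos hxK]

end tools

section counting

variable {α : Type*} [Fintype α] [DecidableEq α]

lemma fiber_card_swap (x y y' : α) :
    (Finset.univ.filter (fun g : Equiv.Perm α => g x = y)).card =
      (Finset.univ.filter (fun g : Equiv.Perm α => g x = y')).card := by
  apply Finset.card_bij' (fun g _ => Equiv.swap y y' * g) (fun g _ => Equiv.swap y y' * g)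
  · intro g hg
    simp only [Finset.mem_filter, Finset.mem_univ, true_and] at hg ⊢
    rw [Equiv.Perm.mul_apply, hg, Equiv.swap_apply_left]
  · intro g hg
    simp only [Finset.mem_filter, Finset.mem_univ, true_and] at hg ⊢
    rw [Equiv.Perm.mul_apply, hg, Equiv.swap_apply_right]
  · intro g _
    rw [← mul_assoc, Equiv.swap_mul_self, one_mul]
  · intro g _
    rw [← mul_assoc, Equiv.swap_mul_self, one_mul]

set_option maxHeartbeats 1000000 in
lemma fiber_card_mul (x y : α) :
    (Finset.univ.filter (fun g : Equiv.Perm α => g x = y)).card * Fintype.card α =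
      Nat.factorial (Fintype.card α) := by
  have h := Finset.card_eq_sum_card_fiberwise
    (s := (Finset.univ : Finset (Equiv.Perm α))) (t := Finset.univ)
    (f := fun g => g x) (fun g _ => Finset.mem_univ _)
  rw [Finset.card_univ, Fintype.card_perm] at h
  have h2 : ∑ y' ∈ Finset.univ,
      (Finset.univ.filter (fun g : Equiv.Perm α => g x = y')).card =
      Fintype.card α * (Finset.univ.filter (fun g : Equiv.Perm α => g x = y)).card := by
    rw [Finset.sum_congr rfl (fun y' _ => fiber_card_swap x y' y), Finset.sum_const,
      Finset.card_univ, smul_eq_mul]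
  rw [h, h2, mul_comm]

end counting

section bound

variable (ι : ℤ → A →⋆ₐ[ℂ] (H →L[ℂ] H))

lemma iota_norm_le (j : ℤ) (a : A) : ‖ι j a‖ ≤ ‖a‖ := by
  letI : CStarAlgebra A :=
    { ‹NormedRing A›, ‹StarRing A›, ‹CompleteSpace A›, ‹CStarRing A›,
      ‹NormedAlgebra ℂ A›, ‹StarModule ℂ A› with }
  exact NonUnitalStarAlgHom.norm_apply_le (ι j) a

lemma term_bound (Ω : H) (hΩ : ‖Ω‖ = 1) (X Z : H →L[ℂ] H) {m : ℕ} (hm : 1 ≤ m)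
    (c : Fin m → ℤ) (B : Fin m → A) :
    ‖(inner ℂ Ω ((X * (List.ofFn fun i => ι (c i) (B i)).prod * Z) Ω) : ℂ)‖ ≤
      ‖X‖ * (∏ i, ‖B i‖) * ‖Z‖ := by
  set W := (List.ofFn fun i => ι (c i) (B i)).prod with hW
  have h1 : ‖(inner ℂ Ω ((X * W * Z) Ω) : ℂ)‖ ≤ ‖X * W * Z‖ := by
    calc ‖(inner ℂ Ω ((X * W * Z) Ω) : ℂ)‖ ≤ ‖Ω‖ * ‖(X * W * Z) Ω‖ := norm_inner_le_norm _ _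
    _ ≤ ‖Ω‖ * (‖X * W * Z‖ * ‖Ω‖) := by
        gcongr
        exact ContinuousLinearMap.le_opNorm _ _
    _ = ‖X * W * Z‖ := by rw [hΩ]; ring
  have hWle : ‖W‖ ≤ ∏ i, ‖B i‖ := by
    have hne : (List.ofFn fun i => ι (c i) (B i)) ≠ [] := by
      simp only [ne_eq, List.ofFn_eq_nil_iff]
      omega
    calc ‖W‖ ≤ ((List.ofFn fun i => ι (c i) (B i)).map norm).prod :=
          List.norm_prod_le' hne
    _ = ∏ i, ‖ι (c i) (B i)‖ := by rw [List.map_ofFn, List.prod_ofFn]; rfl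
    _ ≤ ∏ i, ‖B i‖ :=
        Finset.prod_le_prod (fun i _ => norm_nonneg _) (fun i _ => iota_norm_le ι _ _)
  calc ‖(inner ℂ Ω ((X * W * Z) Ω) : ℂ)‖ ≤ ‖X * W * Z‖ := h1
  _ ≤ ‖X * W‖ * ‖Z‖ := norm_mul_le _ _
  _ ≤ ‖X‖ * ‖W‖ * ‖Z‖ := by gcongr; exact norm_mul_le _ _
  _ ≤ ‖X‖ * (∏ i, ‖B i‖) * ‖Z‖ := by gcongr

end bound

section avg

variable (ι : ℤ → A →⋆ₐ[ℂ] (H →L[ℂ] H))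

lemma card_tendsto : Tendsto (fun I : Finset ℤ => I.card) atTop atTop := by
  refine Filter.tendsto_atTop.mpr fun b => ?_
  set I₀ : Finset ℤ := (Finset.range b).image (fun n : ℕ => (n : ℤ)) with hI₀
  have hcard : I₀.card = b := by
    rw [hI₀, Finset.card_image_of_injective _ (fun a b h => by exact_mod_cast h),
      Finset.card_range]
  filter_upwards [Filter.eventually_ge_atTop I₀] with I hI
  rw [← hcard]
  exact Finset.card_le_card hI

lemma avg_tendsto (Ω : H) (X Z : H →L[ℂ] H) {m : ℕ} (hm : 1 ≤ m)
    (k : Fin m → ℤ) (B : Fin m → A) (L : ℂ) (F : Finset ℤ) (C' : ℝ) (hC' : 0 ≤ C')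
    (hbound : ∀ I : Finset ℤ, ∀ g : Equiv.Perm {x : ℤ // x ∈ I},
      ‖(inner ℂ Ω ((X * (List.ofFn fun i => ι (extendPerm I g (k i)) (B i)).prod * Z) Ω) : ℂ)
        - L‖ ≤ C')
    (hgood : ∀ I : Finset ℤ, ∀ g : Equiv.Perm {x : ℤ // x ∈ I}, (∀ i, k i ∈ I) →
      (∀ i, extendPerm I g (k i) ∉ F) →
      (inner ℂ Ω ((X * (List.ofFn fun i => ι (extendPerm I g (k i)) (B i)).prod * Z) Ω) : ℂ)
        = L) :
    Tendsto (fun I : Finset ℤ =>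
      (Fintype.card (Equiv.Perm {x : ℤ // x ∈ I}) : ℂ)⁻¹ *
        ∑ g : Equiv.Perm {x : ℤ // x ∈ I},
          (inner ℂ Ω ((X * (List.ofFn fun i => ι (extendPerm I g (k i)) (B i)).prod * Z) Ω) : ℂ))
      atTop (nhds L) := by
  classical
  set avg := fun I : Finset ℤ =>
      (Fintype.card (Equiv.Perm {x : ℤ // x ∈ I}) : ℂ)⁻¹ *
        ∑ g : Equiv.Perm {x : ℤ // x ∈ I},
          (inner ℂ Ω ((X * (List.ofFn fun i => ι (extendPerm I g (k i)) (B i)).prod * Z) Ω) : ℂ)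
    with havg
  have key : Tendsto (fun I => avg I - L) atTop (nhds 0) := by
    apply squeeze_zero_norm' (a := fun I : Finset ℤ => ((m : ℝ) * F.card * C') / I.card)
    · set K : Finset ℤ := Finset.image k Finset.univ with hK
      filter_upwards [Filter.eventually_ge_atTop K] with I hKI
      have hkI : ∀ i, k i ∈ I := fun i => hKI (Finset.mem_image_of_mem k (Finset.mem_univ i))
      have hIne : I.Nonempty := ⟨k ⟨0, hm⟩, hkI _⟩
      have hn : 0 < I.card := Finset.card_pos.mpr hIne
      have hcardPerm : Fintype.card (Equiv.Perm {x : ℤ // x ∈ I}) =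
          Nat.factorial I.card := by rw [Fintype.card_perm, Fintype.card_coe]
      have hfactpos : 0 < Nat.factorial I.card := Nat.factorial_pos _
      have hfactne : ((Nat.factorial I.card : ℂ)) ≠ 0 := by exact_mod_cast hfactpos.ne'
      set T : Equiv.Perm {x : ℤ // x ∈ I} → ℂ := fun g =>
        (inner ℂ Ω ((X * (List.ofFn fun i => ι (extendPerm I g (k i)) (B i)).prod * Z) Ω) : ℂ)
        with hT
      set Bad : Finset (Equiv.Perm {x : ℤ // x ∈ I}) :=
        Finset.univ.filter (fun g => ∃ i, extendPerm I g (k i) ∈ F) with hBad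
      have hdiff : avg I - L =
          ((Nat.factorial I.card : ℂ))⁻¹ * ∑ g, (T g - L) := by
        calc avg I - L
            = ((Nat.factorial I.card : ℂ))⁻¹ * ∑ g, T g - L := by simp only [havg, hcardPerm]; rfl
          _ = ((Nat.factorial I.card : ℂ))⁻¹ * ∑ g, T g -
              ((Nat.factorial I.card : ℂ))⁻¹ * ((Nat.factorial I.card : ℂ) * L) := by
                rw [← mul_assoc, inv_mul_cancel₀ hfactne, one_mul]
          _ = ((Nat.factorial I.card : ℂ))⁻¹ * (∑ g, T g - (Nat.factorial I.card : ℂ) * L) := by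
                ring
          _ = ((Nat.factorial I.card : ℂ))⁻¹ * ∑ g, (T g - L) := by
                rw [Finset.sum_sub_distrib, Finset.sum_const, Finset.card_univ, hcardPerm,
                  nsmul_eq_mul]
      -- counting
      have hcount : Bad.card * I.card ≤ m * F.card * Nat.factorial I.card := by
        have hsub : Bad ⊆ Finset.univ.biUnion (fun i : Fin m =>
            Finset.univ.filter (fun g => extendPerm I g (k i) ∈ F)) := by
          intro g hg
          rw [hBad, Finset.mem_filter] at hg
          obtain ⟨-, i, hi⟩ := hg
          exact Finset.mem_biUnion.mpr ⟨i, Finset.mem_univ _,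
            Finset.mem_filter.mpr ⟨Finset.mem_univ _, hi⟩⟩
        have h1 : Bad.card ≤ ∑ i : Fin m,
            (Finset.univ.filter (fun g : Equiv.Perm {x : ℤ // x ∈ I} =>
              extendPerm I g (k i) ∈ F)).card :=
          (Finset.card_le_card hsub).trans (Finset.card_biUnion_le)
        have h2 : ∀ i : Fin m,
            (Finset.univ.filter (fun g : Equiv.Perm {x : ℤ // x ∈ I} =>
              extendPerm I g (k i) ∈ F)).card * I.card ≤ F.card * Nat.factorial I.card := by
          intro i
          set x₀ : {x : ℤ // x ∈ I} := ⟨k i, hkI i⟩ with hx₀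
          set Fsub : Finset {x : ℤ // x ∈ I} :=
            Finset.univ.filter (fun t => (t : ℤ) ∈ F) with hFsub
          have hsub2 : (Finset.univ.filter (fun g : Equiv.Perm {x : ℤ // x ∈ I} =>
              extendPerm I g (k i) ∈ F)) ⊆ Fsub.biUnion (fun t =>
                Finset.univ.filter (fun g => g x₀ = t)) := by
            intro g hg
            rw [Finset.mem_filter] at hg
            obtain ⟨-, hg⟩ := hg
            rw [extendPerm_apply_mem I g (hkI i)] at hg
            exact Finset.mem_biUnion.mpr ⟨g x₀, Finset.mem_filter.mpr
              ⟨Finset.mem_univ _, hg⟩, Finset.mem_filter.mpr ⟨Finset.mem_univ _, rfl⟩⟩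
          have h3 : (Finset.univ.filter (fun g : Equiv.Perm {x : ℤ // x ∈ I} =>
              extendPerm I g (k i) ∈ F)).card ≤ ∑ t ∈ Fsub,
                (Finset.univ.filter (fun g : Equiv.Perm {x : ℤ // x ∈ I} =>
                  g x₀ = t)).card :=
            (Finset.card_le_card hsub2).trans (Finset.card_biUnion_le)
          have h4 : ∀ t : {x : ℤ // x ∈ I},
              (Finset.univ.filter (fun g : Equiv.Perm {x : ℤ // x ∈ I} =>
                g x₀ = t)).card * I.card = Nat.factorial I.card := by
            intro t
            have := fiber_card_mul x₀ t
            rwa [Fintype.card_coe] at this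
          have h5 : Fsub.card ≤ F.card := by
            apply Finset.card_le_card_of_injOn (f := fun t : {x : ℤ // x ∈ I} => (t : ℤ))
              (s := Fsub) (t := F)
            · intro t ht
              rw [hFsub, Finset.mem_coe, Finset.mem_filter] at ht
              exact ht.2
            · intro t _ t' _ h
              exact Subtype.ext h
          calc (Finset.univ.filter (fun g : Equiv.Perm {x : ℤ // x ∈ I} =>
              extendPerm I g (k i) ∈ F)).card * I.card
              ≤ (∑ t ∈ Fsub, (Finset.univ.filter
                  (fun g : Equiv.Perm {x : ℤ // x ∈ I} => g x₀ = t)).card) * I.card := by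
                exact Nat.mul_le_mul_right _ h3
            _ = ∑ t ∈ Fsub, ((Finset.univ.filter
                  (fun g : Equiv.Perm {x : ℤ // x ∈ I} => g x₀ = t)).card * I.card) := by
                rw [Finset.sum_mul]
            _ = ∑ _t ∈ Fsub, Nat.factorial I.card :=
                Finset.sum_congr rfl (fun t _ => h4 t)
            _ = Fsub.card * Nat.factorial I.card := by rw [Finset.sum_const, smul_eq_mul]
            _ ≤ F.card * Nat.factorial I.card := Nat.mul_le_mul_right _ h5
        calc Bad.card * I.card
            ≤ (∑ i : Fin m, (Finset.univ.filter
                (fun g : Equiv.Perm {x : ℤ // x ∈ I} =>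
                  extendPerm I g (k i) ∈ F)).card) * I.card := Nat.mul_le_mul_right _ h1
          _ = ∑ i : Fin m, ((Finset.univ.filter
                (fun g : Equiv.Perm {x : ℤ // x ∈ I} =>
                  extendPerm I g (k i) ∈ F)).card * I.card) := by rw [Finset.sum_mul]
          _ ≤ ∑ _i : Fin m, F.card * Nat.factorial I.card :=
              Finset.sum_le_sum (fun i _ => h2 i)
          _ = m * (F.card * Nat.factorial I.card) := by
              rw [Finset.sum_const, Finset.card_univ, Fintype.card_fin, smul_eq_mul]
          _ = m * F.card * Nat.factorial I.card := by ring
      -- norm estimate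
      have hsumnorm : ∑ g, ‖T g - L‖ ≤ (Bad.card : ℝ) * C' := by
        have : ∀ g : Equiv.Perm {x : ℤ // x ∈ I},
            ‖T g - L‖ ≤ if g ∈ Bad then C' else 0 := by
          intro g
          by_cases hg : g ∈ Bad
          · rw [if_pos hg]; exact hbound I g
          · rw [if_neg hg]
            have hgood' : ∀ i, extendPerm I g (k i) ∉ F := by
              intro i hi
              exact hg (Finset.mem_filter.mpr ⟨Finset.mem_univ _, ⟨i, hi⟩⟩)
            rw [hT]
            simp only [hgood I g hkI hgood', sub_self, norm_zero, le_refl]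
        calc ∑ g, ‖T g - L‖ ≤ ∑ g, (if g ∈ Bad then C' else 0) :=
            Finset.sum_le_sum (fun g _ => this g)
          _ = ∑ _g ∈ Bad, C' := by rw [Finset.sum_ite_mem, Finset.univ_inter]
          _ = (Bad.card : ℝ) * C' := by rw [Finset.sum_const, nsmul_eq_mul]
      have hfactposR : (0 : ℝ) < (Nat.factorial I.card : ℝ) := by exact_mod_cast hfactpos
      have hnR : (0 : ℝ) < (I.card : ℝ) := by exact_mod_cast hn
      have hratio : (Bad.card : ℝ) / (Nat.factorial I.card : ℝ) ≤
          ((m : ℝ) * F.card) / I.card := by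
        rw [div_le_div_iff₀ hfactposR hnR]
        exact_mod_cast hcount
      calc ‖avg I - L‖ = ‖((Nat.factorial I.card : ℂ))⁻¹‖ * ‖∑ g, (T g - L)‖ := by
            rw [hdiff, norm_mul]
        _ = (Nat.factorial I.card : ℝ)⁻¹ * ‖∑ g, (T g - L)‖ := by
            rw [norm_inv, Complex.norm_natCast]
        _ ≤ (Nat.factorial I.card : ℝ)⁻¹ * ((Bad.card : ℝ) * C') := by
            gcongr
            exact (norm_sum_le _ _).trans hsumnorm
        _ = ((Bad.card : ℝ) / (Nat.factorial I.card : ℝ)) * C' := by ring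
        _ ≤ (((m : ℝ) * F.card) / I.card) * C' := by gcongr
        _ = ((m : ℝ) * F.card * C') / I.card := by ring
    · exact (tendsto_const_div_atTop_nhds_zero_nat ((m : ℝ) * F.card * C')).comp card_tendsto
  have := key.add_const L
  simpa using this

end avg

section main

variable (ι : ℤ → A →⋆ₐ[ℂ] (H →L[ℂ] H))

/-- the functional `Y ↦ ⟨Ω, (X * Y * Z) Ω⟩` as a linear map -/
noncomputable def midFunc (Ω : H) (X Z : H →L[ℂ] H) : (H →L[ℂ] H) →ₗ[ℂ] ℂ where
  toFun Y := inner ℂ Ω ((X * Y * Z) Ω)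
  map_add' Y Y' := by
    simp [mul_add, add_mul, ContinuousLinearMap.add_apply, inner_add_right]
  map_smul' c Y := by
    simp [mul_smul_comm, smul_mul_assoc, ContinuousLinearMap.smul_apply, inner_smul_right]

/-- the functional `Y ↦ c * ⟨Ω, Y Ω⟩` as a linear map -/
noncomputable def scaledEval (Ω : H) (c : ℂ) : (H →L[ℂ] H) →ₗ[ℂ] ℂ where
  toFun Y := c * inner ℂ Ω (Y Ω)
  map_add' Y Y' := by
    simp [ContinuousLinearMap.add_apply, inner_add_right]; ring
  map_smul' d Y := by
    simp [ContinuousLinearMap.smul_apply, inner_smul_right]; ring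


/-- for an exchangeable process, the block singleton condition is
equivalent to the property of convergence to equilibrium along the net of
finite subsets of `ℤ`. -/
theorem blockSingleton_iff_convergenceToEquilibrium
    (ι : ℤ → A →⋆ₐ[ℂ] (H →L[ℂ] H)) (Ω : H) (hΩ : ‖Ω‖ = 1)
    (hexch : ∀ g : Equiv.Perm ℤ, {x : ℤ | g x ≠ x}.Finite →
      ∀ n : ℕ, 1 ≤ n → ∀ (j : Fin n → ℤ) (a : Fin n → A),
        (inner ℂ Ω (((List.ofFn fun i => ι (g (j i)) (a i)).prod) Ω) : ℂ)
          = inner ℂ Ω (((List.ofFn fun i => ι (j i) (a i)).prod) Ω)) :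
    (∀ I₁ I₂ I₃ : Finset ℤ, Disjoint (I₁ ∪ I₃) I₂ →
        ∀ X ∈ localAlgebra ι I₁, ∀ Y ∈ localAlgebra ι I₂, ∀ Z ∈ localAlgebra ι I₃,
          (inner ℂ Ω ((X * Y * Z) Ω) : ℂ) = inner ℂ Ω ((X * Z) Ω) * inner ℂ Ω (Y Ω))
      ↔
    (∀ I₁ I₃ : Finset ℤ, ∀ X ∈ localAlgebra ι I₁, ∀ Z ∈ localAlgebra ι I₃,
        ∀ m : ℕ, 1 ≤ m → ∀ (k : Fin m → ℤ) (B : Fin m → A),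
          Tendsto
            (fun I : Finset ℤ =>
              (Fintype.card (Equiv.Perm {x : ℤ // x ∈ I}) : ℂ)⁻¹ *
                ∑ g : Equiv.Perm {x : ℤ // x ∈ I},
                  (inner ℂ Ω ((X *
                    (List.ofFn fun i => ι (extendPerm I g (k i)) (B i)).prod * Z) Ω) : ℂ))
            atTop
            (nhds ((inner ℂ Ω ((X * Z) Ω) : ℂ) *
              inner ℂ Ω (((List.ofFn fun i => ι (k i) (B i)).prod) Ω)))) := by
  constructor
  · -- block singleton → convergence to equilibrium
    intro hBS I₁ I₃ X hX Z hZ m hm k B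
    set Y := (List.ofFn fun i => ι (k i) (B i)).prod with hY
    set L := (inner ℂ Ω ((X * Z) Ω) : ℂ) * inner ℂ Ω (Y Ω) with hL
    apply avg_tendsto ι Ω X Z hm k B L (I₁ ∪ I₃) (‖X‖ * (∏ i, ‖B i‖) * ‖Z‖ + ‖L‖)
    · positivity
    · intro I g
      calc ‖(inner ℂ Ω ((X * (List.ofFn fun i =>
              ι (extendPerm I g (k i)) (B i)).prod * Z) Ω) : ℂ) - L‖
          ≤ ‖(inner ℂ Ω ((X * (List.ofFn fun i =>
              ι (extendPerm I g (k i)) (B i)).prod * Z) Ω) : ℂ)‖ + ‖L‖ := norm_sub_le _ _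
        _ ≤ ‖X‖ * (∏ i, ‖B i‖) * ‖Z‖ + ‖L‖ := by
            gcongr
            exact term_bound ι Ω hΩ X Z hm _ B
    · intro I g hkI hout
      set W := (List.ofFn fun i => ι (extendPerm I g (k i)) (B i)).prod with hW
      set J := Finset.image (fun i => extendPerm I g (k i)) Finset.univ with hJ
      have hWJ : W ∈ localAlgebra ι J := by
        apply list_prod_mem
        intro x hx
        rw [List.mem_ofFn] at hx
        obtain ⟨i, rfl⟩ := hx
        apply StarAlgebra.subset_adjoin
        simp only [Set.mem_iUnion, Set.mem_range]
        exact ⟨extendPerm I g (k i),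
          Finset.mem_image_of_mem _ (Finset.mem_univ i), B i, rfl⟩
      have hdisjJ : Disjoint (I₁ ∪ I₃) J := by
        rw [Finset.disjoint_right]
        intro t ht
        rw [hJ, Finset.mem_image] at ht
        obtain ⟨i, -, rfl⟩ := ht
        exact hout i
      have h1 := hBS I₁ J I₃ hdisjJ X hX W hWJ Z hZ
      have h2 : (inner ℂ Ω (W Ω) : ℂ) = inner ℂ Ω (Y Ω) := by
        have h3 := sandwich_exchange ι Ω hexch (I₁ := ∅) (I₃ := ∅) (X := 1) (Z := 1)
          (one_mem _) (one_mem _) (extendPerm I g) (extendPerm_support I g)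
          (by simp) hm k B
        simpa [one_mul, mul_one] using h3
      rw [h1, h2]
  · -- convergence to equilibrium → block singleton
    intro hconv I₁ I₂ I₃ hdisj X hX Y hY Z hZ
    have core : Set.EqOn (midFunc Ω X Z) (scaledEval Ω (inner ℂ Ω ((X * Z) Ω)))
        ((Submonoid.closure (⋃ j ∈ I₂, Set.range fun a : A => ι j a) :
          Submonoid (H →L[ℂ] H)) : Set (H →L[ℂ] H)) := by
      intro Yp hYp
      obtain ⟨n, j, a, hj, rfl⟩ := rep_of_mem_closure ι hYp
      show (inner ℂ Ω ((X * (List.ofFn fun i => ι (j i) (a i)).prod * Z) Ω) : ℂ)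
        = inner ℂ Ω ((X * Z) Ω) * inner ℂ Ω (((List.ofFn fun i => ι (j i) (a i)).prod) Ω)
      rcases Nat.eq_zero_or_pos n with hn | hn
      · subst hn
        simp only [List.ofFn_zero, List.prod_nil, mul_one, ContinuousLinearMap.one_apply]
        rw [inner_self_eq_norm_sq_to_K, hΩ]
        norm_num
      · have h1 := hconv I₁ I₃ X hX Z hZ n hn j a
        have hL₂ : True := trivial
        have h2 : Tendsto (fun I : Finset ℤ =>
            (Fintype.card (Equiv.Perm {x : ℤ // x ∈ I}) : ℂ)⁻¹ *
              ∑ g : Equiv.Perm {x : ℤ // x ∈ I},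
                (inner ℂ Ω ((X *
                  (List.ofFn fun i => ι (extendPerm I g (j i)) (a i)).prod * Z) Ω) : ℂ))
            atTop (nhds (inner ℂ Ω ((X * (List.ofFn fun i => ι (j i) (a i)).prod * Z) Ω))) := by
          apply avg_tendsto ι Ω X Z hn j a _ (I₁ ∪ I₃)
            (‖X‖ * (∏ i, ‖a i‖) * ‖Z‖ +
              ‖(inner ℂ Ω ((X * (List.ofFn fun i => ι (j i) (a i)).prod * Z) Ω) : ℂ)‖)
          · positivity
          · intro I g
            calc ‖(inner ℂ Ω ((X * (List.ofFn fun i =>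
                    ι (extendPerm I g (j i)) (a i)).prod * Z) Ω) : ℂ) -
                    inner ℂ Ω ((X * (List.ofFn fun i => ι (j i) (a i)).prod * Z) Ω)‖
                ≤ ‖(inner ℂ Ω ((X * (List.ofFn fun i =>
                    ι (extendPerm I g (j i)) (a i)).prod * Z) Ω) : ℂ)‖ +
                    ‖(inner ℂ Ω ((X * (List.ofFn fun i => ι (j i) (a i)).prod * Z) Ω) : ℂ)‖ :=
                  norm_sub_le _ _
              _ ≤ ‖X‖ * (∏ i, ‖a i‖) * ‖Z‖ +
                    ‖(inner ℂ Ω ((X * (List.ofFn fun i => ι (j i) (a i)).prod * Z) Ω) : ℂ)‖ := by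
                  gcongr
                  exact term_bound ι Ω hΩ X Z hn _ a
          · intro I g hkI hout
            obtain ⟨σ, hσfin, hσfix, hσK⟩ := exists_perm_extend (I₁ ∪ I₃)
              (Finset.image j Finset.univ) (⇑(extendPerm I g))
              ((extendPerm I g).injective.injOn)
              (by
                intro x hx
                rw [Finset.mem_image] at hx
                obtain ⟨i, -, rfl⟩ := hx
                exact hout i)
              (hdisj.mono_right (by
                intro x hx
                rw [Finset.mem_image] at hx
                obtain ⟨i, -, rfl⟩ := hx
                exact hj i))
            have h3 := sandwich_exchange ι Ω hexch hX hZ σ hσfin hσfix hn j a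
            have hfun : (fun i => ι (extendPerm I g (j i)) (a i)) =
                (fun i => ι (σ (j i)) (a i)) := by
              funext i
              rw [hσK (j i) (Finset.mem_image_of_mem _ (Finset.mem_univ i))]
            rw [hfun]
            exact h3
        exact tendsto_nhds_unique h2 h1
    exact LinearMap.eqOn_span core (mem_span_of_mem_localAlgebra ι hY)


end main
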